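/- Let G be a group, μ a character of G into ℂ\{0}, and f a nonzero solution of f(xy) + μ(y) f(xy⁻¹) = 2 f(x) f(y) for all x, y ∈ G. Then f is central, i.e. f(xy) = f(yx) for all x, y ∈ G. -/

import Mathlib

theorem stmt_8 {G : Type*} [Group G] (μ f : G → ℂ)
    (hμ : ∀ x y, μ (x * y) = μ x * μ y) (hμ0 : ∀ x, μ x ≠ 0)
    (hf : ∀ x y, f (x * y) + μ y * f (x * y⁻¹) = 2 * f x * f y)
    (hf0 : f ≠ 0) : ∀ x y, f (x * y) = f (y * x) := by
  have hμ1 : μ 1 = 1 := by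
    have := hμ 1 1
    simp at this
    field_simp [hμ0 1] at this
    exact this.symm
  have hfe : f 1 = 1 := by
    by_contra h
    apply hf0
    funext x
    have := hf x 1
    simp [hμ1] at this
    -- this : f x + f x = 2 * f x * f 1
    have h2 : 2 * f x = 2 * f x * f 1 := by linear_combination this
    have h3 : 2 * f x * (1 - f 1) = 0 := by ring_nf; linear_combination h2
    rcases mul_eq_zero.mp h3 with h4 | h4
    · simpa using mul_eq_zero.mp h4
    · exact absurd (by linear_combination -h4) h
  have hinv : ∀ z : G, μ z * f z⁻¹ = f z := by
    intro z
    have := hf 1 z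
    simp [hfe] at this
    linear_combination this
  intro x y
  have h1 := hf x y
  have h2 := hf y x
  have key : μ x * f (y * x⁻¹) = μ y * f (x * y⁻¹) := by
    have hz := hinv (y * x⁻¹)
    have : (y * x⁻¹)⁻¹ = x * y⁻¹ := by group
    rw [this] at hz
    have hμx : μ (y * x⁻¹) = μ y * (μ x)⁻¹ := by
      have h5 : μ (y * x⁻¹) * μ x = μ y := by rw [← hμ]; group
      field_simp [hμ0 x] at h5 ⊢
      linear_combination h5
    calc μ x * f (y * x⁻¹) = μ x * (μ (y * x⁻¹) * f (x * y⁻¹)) := by rw [hz]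
      _ = μ y * f (x * y⁻¹) := by rw [hμx]; field_simp [hμ0 x]
  linear_combination h1 - h2 + key
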